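/- Let X ⊆ A^ℤ be a subshift and X* its star-studded version. For any x₁⁻, x₂⁻ ∈ X⁻: (a) foll_{X*}(x₁⁻) ≠ foll_{X*}(x₂⁻ *); (b) if foll_X(x₁⁻) ≠ foll_X(x₂⁻), then foll_{X*}(x₁⁻) ≠ foll_{X*}(x₂⁻) and foll_{X*}(x₁⁻ *) ≠ foll_{X*}(x₂⁻ *). Consequently, if X is non-sofic then X* is non-sofic. -/

import Mathlib

namespace Paper

variable {A B C : Type*}

def shiftMap (x : ℤ → A) : ℤ → A := fun i => x (i + 1)

def shiftInvMap (x : ℤ → A) : ℤ → A := fun i => x (i - 1)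

/-- A subshift: nonempty, shift-invariant (both directions), and closed
(expressed combinatorially: any configuration all of whose central patterns
are approximated by members is a member). -/
def IsSubshift (X : Set (ℤ → A)) : Prop :=
  X.Nonempty ∧ (∀ x ∈ X, shiftMap x ∈ X) ∧ (∀ x ∈ X, shiftInvMap x ∈ X) ∧
  ∀ x : ℤ → A, (∀ n : ℕ, ∃ y ∈ X, ∀ i : ℤ, |i| ≤ (n : ℤ) → y i = x i) → x ∈ X

/-- The word `x[i, i+k-1]`. -/
def cfgWord (x : ℤ → A) (i : ℤ) (k : ℕ) : List A :=
  List.ofFn (fun t : Fin k => x (i + ((t : ℕ) : ℤ)))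

/-- The language of a set of configurations. -/
def lang (X : Set (ℤ → A)) : Set (List A) := {w | ∃ x ∈ X, ∃ i : ℤ, cfgWord x i w.length = w}

def TransitiveShift (X : Set (ℤ → A)) : Prop :=
  ∀ u ∈ lang X, ∀ v ∈ lang X, ∃ w : List A, u ++ w ++ v ∈ lang X

/-- Left ray of a configuration: `leftRay x n = x (-1-n)`. -/
def leftRay (x : ℤ → A) : ℕ → A := fun n => x (-1 - (n : ℤ))

def rightRay (x : ℤ → A) : ℕ → A := fun n => x (n : ℤ)

def LeftRays (X : Set (ℤ → A)) : Set (ℕ → A) := leftRay '' X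

def RightRays (X : Set (ℤ → A)) : Set (ℕ → A) := rightRay '' X

/-- Glue a left ray and a right ray into a configuration. -/
def glue (l r : ℕ → A) : ℤ → A := fun i => if 0 ≤ i then r i.toNat else l (-1 - i).toNat

/-- Follower set of a left-infinite sequence. -/
def foll (X : Set (ℤ → A)) (l : ℕ → A) : Set (ℕ → A) := {r | glue l r ∈ X}

def wordThen (w : List A) (r : ℕ → A) : ℕ → A :=
  fun n => if h : n < w.length then w.get ⟨n, h⟩ else r (n - w.length)

/-- Follower set of a word. -/
def follW (X : Set (ℤ → A)) (w : List A) : Set (ℕ → A) := {r | wordThen w r ∈ RightRays X}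

def occursInLeft (l : ℕ → A) (w : List A) : Prop :=
  ∃ j : ℕ, ∀ k : Fin w.length, l (j + (w.length - 1 - (k : ℕ))) = w.get k

/-- The language of a left-infinite sequence. -/
def langL (l : ℕ → A) : Set (List A) := {w | occursInLeft l w}

/-- The left ray `l` ends with the word `w`. -/
def raySuffix (l : ℕ → A) (w : List A) : Prop :=
  ∀ k : Fin w.length, l (w.length - 1 - (k : ℕ)) = w.get k

def HalfSyncWord (X : Set (ℤ → A)) (w : List A) : Prop :=
  w ∈ lang X ∧ ∃ l ∈ LeftRays X, raySuffix l w ∧ langL l = lang X ∧ foll X l = follW X w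

def HalfSynchronized (X : Set (ℤ → A)) : Prop := TransitiveShift X ∧ ∃ w, HalfSyncWord X w

def SyncWord (X : Set (ℤ → A)) (w : List A) : Prop :=
  w ∈ lang X ∧ ∀ l ∈ LeftRays X, raySuffix l w → foll X l = follW X w

def Synchronized (X : Set (ℤ → A)) : Prop := TransitiveShift X ∧ ∃ w, SyncWord X w

/-- Product of two subshifts, over the product alphabet. -/
def prodShift (Y : Set (ℤ → B)) (Z : Set (ℤ → C)) : Set (ℤ → B × C) :=
  {x | (fun i => (x i).1) ∈ Y ∧ (fun i => (x i).2) ∈ Z}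

/-- Identification of a pair of sets of right rays with a set of right rays
over the product alphabet. -/
def prodRaySet (S : Set (ℕ → B)) (T : Set (ℕ → C)) : Set (ℕ → B × C) :=
  {r | (fun n => (r n).1) ∈ S ∧ (fun n => (r n).2) ∈ T}

/-- Extend a left ray by one more symbol on the right. -/
def extendRay (l : ℕ → A) (a : A) : ℕ → A := fun n => if n = 0 then a else l (n - 1)

/-- Edge of the Krieger graph from `u` to `v` labeled `a`. -/
def KEdge (X : Set (ℤ → A)) (u : Set (ℕ → A)) (a : A) (v : Set (ℕ → A)) : Prop :=
  ∃ l ∈ LeftRays X, extendRay l a ∈ LeftRays X ∧ u = foll X l ∧ v = foll X (extendRay l a)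

def KStep (X : Set (ℤ → A)) (u v : Set (ℕ → A)) : Prop := ∃ a, KEdge X u a v

/-- Existence of a finite path in the Krieger graph. -/
def KReach (X : Set (ℤ → A)) : Set (ℕ → A) → Set (ℕ → A) → Prop :=
  Relation.ReflTransGen (KStep X)

def KVertex (X : Set (ℤ → A)) (v : Set (ℕ → A)) : Prop := ∃ l ∈ LeftRays X, v = foll X l

/-- A subshift is sofic iff it has finitely many follower sets. -/
def Sofic (X : Set (ℤ → A)) : Prop := {v : Set (ℕ → A) | KVertex X v}.Finite

/-- Vertex of the Fischer graph (w.r.t. half-synchronizing word `w`): a vertex of the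
Krieger graph in the maximal strongly connected subgraph containing `foll w`. -/
def FVertex (X : Set (ℤ → A)) (w : List A) (v : Set (ℕ → A)) : Prop :=
  KVertex X v ∧ KReach X (follW X w) v ∧ KReach X v (follW X w)

/-- Directed (multi)graph with vertex type `V` and edge type `E`. -/
structure DiGraph (V : Type*) (E : Type*) where
  ini : E → V
  ter : E → V

variable {V E V' E' : Type*}

/-- Bi-infinite path on a graph. -/
def BiPath (G : DiGraph V E) (x : ℤ → E) : Prop := ∀ i : ℤ, G.ter (x i) = G.ini (x (i + 1))

/-- `p` is a finite path of `m+1` edges. -/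
def FinPath (G : DiGraph V E) (m : ℕ) (p : Fin (m + 1) → E) : Prop :=
  ∀ k : Fin m, G.ter (p k.castSucc) = G.ini (p k.succ)

/-- The subpath `x[i, i+n]` of a bi-infinite path is a shortest path between its endpoints. -/
def GeodesicSeg (G : DiGraph V E) (x : ℤ → E) (i : ℤ) (n : ℕ) : Prop :=
  ∀ (m : ℕ) (p : Fin (m + 1) → E), FinPath G m p →
    G.ini (p 0) = G.ini (x i) → G.ter (p (Fin.last m)) = G.ter (x (i + (n : ℤ))) → n ≤ m

def EvGeodesic (G : DiGraph V E) (x : ℤ → E) : Prop :=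
  ∃ i₀ : ℤ, ∀ i : ℤ, i₀ ≤ i → ∀ n : ℕ, GeodesicSeg G x i n

/-- Strictly proximal pair of bi-infinite paths. -/
def StrictProxPair (x y : ℤ → E) : Prop :=
  (∀ n : ℕ, ∃ i : ℕ, ∀ k : ℕ, k ≤ n → x ((i : ℤ) + (k : ℤ)) = y ((i : ℤ) + (k : ℤ))) ∧
  ∀ N : ℕ, ∃ i : ℕ, N ≤ i ∧ x ((i : ℕ) : ℤ) ≠ y ((i : ℕ) : ℤ)

def HasEvGeoProxPair (G : DiGraph V E) : Prop :=
  ∃ x y : ℤ → E, BiPath G x ∧ BiPath G y ∧ EvGeodesic G x ∧ EvGeodesic G y ∧ StrictProxPair x y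

/-- Edges of the Fischer graph: Krieger edges between Fischer vertices. -/
def FischerE (X : Set (ℤ → A)) (w : List A) : Type _ :=
  {t : Set (ℕ → A) × A × Set (ℕ → A) //
    FVertex X w t.1 ∧ FVertex X w t.2.2 ∧ KEdge X t.1 t.2.1 t.2.2}

def FischerGraph (X : Set (ℤ → A)) (w : List A) : DiGraph (Set (ℕ → A)) (FischerE X w) :=
  ⟨fun e => e.1.1, fun e => e.1.2.2⟩

def SlidingBlockCode (X : Set (ℤ → A)) (F : (ℤ → A) → (ℤ → B)) : Prop :=
  ∃ (r : ℕ) (f : (Fin (2 * r + 1) → A) → B),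
    ∀ x ∈ X, ∀ i : ℤ, F x i = f (fun k => x (i + ((k : ℕ) : ℤ) - (r : ℤ)))

def ShiftConjugate (X : Set (ℤ → A)) (Y : Set (ℤ → B)) : Prop :=
  ∃ F : (ℤ → A) → (ℤ → B), SlidingBlockCode X F ∧ Set.InjOn F X ∧ F '' X = Y

def DirectPrime (X : Set (ℤ → A)) : Prop :=
  ∀ (B C : Type) (_ : Finite B) (_ : Finite C) (Y : Set (ℤ → B)) (Z : Set (ℤ → C)),
    IsSubshift Y → IsSubshift Z → ShiftConjugate X (prodShift Y Z) →
    (∃ y, Y = {y}) ∨ (∃ z, Z = {z})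

/-- The star-studded version of a subshift: configurations of `X` with `*` (here `none`)
interleaved so that no two consecutive `*` occur. -/
def starShift (X : Set (ℤ → A)) : Set (ℤ → Option A) :=
  {x | (∀ i : ℤ, ¬ (x i = none ∧ x (i + 1) = none)) ∧
       ∀ (i : ℤ) (k : ℕ), (cfgWord x i k).reduceOption ∈ lang X}

def someRay (l : ℕ → A) : ℕ → Option A := fun n => some (l n)

/-! ### Auxiliary lemmas -/

section Aux

variable {X : Set (ℤ → A)} {x y : ℤ → A} {p i j : ℤ} {k : ℕ}

lemma cfgWord_length (x : ℤ → A) (i : ℤ) (k : ℕ) : (cfgWord x i k).length = k := by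
  simp [cfgWord]

lemma mem_lang (hx : x ∈ X) (i : ℤ) (k : ℕ) : cfgWord x i k ∈ lang X :=
  ⟨x, hx, i, by rw [cfgWord_length]⟩

lemma cfgWord_apply (h : cfgWord x i k = cfgWord y j k) {m : ℕ} (hm : m < k) :
    x (i + m) = y (j + m) := by
  unfold cfgWord at h
  rw [List.ofFn_inj] at h
  exact congrFun h ⟨m, hm⟩

lemma cfgWord_cons (x : ℤ → A) (i : ℤ) (k : ℕ) :
    cfgWord x i (k + 1) = x i :: cfgWord x (i + 1) k := by
  unfold cfgWord
  rw [List.ofFn_succ]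
  congr 1
  · exact congrArg x (by simp)
  · exact congrArg List.ofFn (funext fun t => congrArg x (by
      have : ((t.succ : Fin (k+1)) : ℕ) = (t : ℕ) + 1 := rfl
      rw [this]; push_cast; ring))

lemma cfgWord_append (x : ℤ → A) (i : ℤ) (a b : ℕ) :
    cfgWord x i (a + b) = cfgWord x i a ++ cfgWord x (i + a) b := by
  unfold cfgWord
  rw [List.ofFn_add]
  congr 1
  exact congrArg List.ofFn (funext fun t => congrArg x (by
    rw [Fin.coe_natAdd]; push_cast; ring))

lemma cfgWord_comp {B : Type*} (g : A → B) (x : ℤ → A) (i : ℤ) (k : ℕ) :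
    cfgWord (fun j => g (x j)) i k = (cfgWord x i k).map g := by
  unfold cfgWord
  rw [List.map_ofFn]
  rfl

lemma red_map_some (l : List A) : (l.map some).reduceOption = l := by
  induction l with
  | nil => rfl
  | cons a t ih => simp [ih]

lemma shift_mem (hX : IsSubshift X) (m : ℤ) (hx : x ∈ X) : (fun i => x (i + m)) ∈ X := by
  induction m using Int.induction_on with
  | zero => simpa using hx
  | succ n ih =>
      have h2 := hX.2.1 _ ih
      have he : shiftMap (fun i => x (i + (n : ℤ))) = fun i => x (i + ((n : ℤ) + 1)) := by
        funext i; exact congrArg x (by ring)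
      rwa [he] at h2
  | pred n ih =>
      have h2 := hX.2.2.1 _ ih
      have he : shiftInvMap (fun i => x (i + (-(n : ℤ)))) = fun i => x (i + (-(n : ℤ) - 1)) := by
        funext i; exact congrArg x (by ring)
      rwa [he] at h2

/-- Flexible closure lemma. -/
lemma mem_of_words (hX : IsSubshift X) (x : ℤ → A)
    (h : ∀ n : ℕ, ∃ (i : ℤ) (k : ℕ), i ≤ -(n : ℤ) ∧ (n : ℤ) < i + k ∧ cfgWord x i k ∈ lang X) :
    x ∈ X := by
  apply hX.2.2.2
  intro n
  obtain ⟨i, k, hi, hk, w⟩ := h n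
  rw [lang, Set.mem_setOf_eq] at w
  obtain ⟨y, hy, j, hw⟩ := w
  rw [cfgWord_length] at hw
  refine ⟨fun t => y (t + (j - i)), shift_mem hX _ hy, fun t ht => ?_⟩
  rw [abs_le] at ht
  have hti : i ≤ t := le_trans hi ht.1
  set m : ℕ := (t - i).toNat with hm
  have hmz : (m : ℤ) = t - i := Int.toNat_of_nonneg (by omega)
  have hmk : m < k := by omega
  have := cfgWord_apply hw hmk
  calc y (t + (j - i)) = y (j + m) := congrArg y (by omega)
    _ = x (i + m) := this
    _ = x t := congrArg x (by omega)

/-- Insert a `*` at position `p` (symbols at positions `≥ p` get shifted right by one). -/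
def insR (x : ℤ → A) (p : ℤ) : ℤ → Option A :=
  fun i => if i < p then some (x i) else if i = p then none else some (x (i - 1))

lemma insR_eq_none {x : ℤ → A} {p i : ℤ} (h : insR x p i = none) : i = p := by
  unfold insR at h
  split_ifs at h with h1 h2
  · exact h2

lemma insR_word_left (x : ℤ → A) (h : i + k ≤ p) :
    cfgWord (insR x p) i k = (cfgWord x i k).map some := by
  unfold cfgWord
  rw [List.map_ofFn]
  exact congrArg List.ofFn (funext fun t => by
    have ht := t.isLt
    show insR x p _ = _
    unfold insR
    rw [if_pos (by omega)]
    rfl)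

lemma insR_word_right (x : ℤ → A) (h : p < i) :
    cfgWord (insR x p) i k = (cfgWord x (i - 1) k).map some := by
  unfold cfgWord
  rw [List.map_ofFn]
  exact congrArg List.ofFn (funext fun t => by
    have ht := t.isLt
    show insR x p _ = _
    unfold insR
    rw [if_neg (by omega), if_neg (by omega)]
    exact congrArg some (congrArg x (by ring)))

lemma insR_word_mid (x : ℤ → A) (h1 : i ≤ p) (h2 : p < i + k) :
    (cfgWord (insR x p) i k).reduceOption = cfgWord x i (k - 1) := by
  set a : ℕ := (p - i).toNat with ha
  have haz : (a : ℤ) = p - i := Int.toNat_of_nonneg (by omega)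
  obtain ⟨c, hc⟩ : ∃ c, k = a + (c + 1) := ⟨k - (a + 1), by omega⟩
  subst hc
  rw [cfgWord_append]
  have hip : i + (a : ℤ) = p := by omega
  rw [hip, cfgWord_cons]
  have hh : insR x p p = none := by unfold insR; rw [if_neg (by omega), if_pos rfl]
  rw [hh, insR_word_left x (by omega), insR_word_right x (by omega)]
  rw [List.reduceOption_append, red_map_some, List.reduceOption_cons_of_none, red_map_some]
  have h1' : p + 1 - 1 = p := by ring
  rw [h1', ← hip, ← cfgWord_append]
  have h3 : a + (c + 1) - 1 = a + c := by omega
  rw [h3]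

lemma insR_mem (hx : x ∈ X) (p : ℤ) : insR x p ∈ starShift X := by
  constructor
  · rintro i ⟨hA, hB⟩
    have := insR_eq_none hA
    have := insR_eq_none hB
    omega
  · intro i k
    rcases le_or_gt (i + k) p with h | h
    · rw [insR_word_left x h, red_map_some]; exact mem_lang hx _ _
    · rcases lt_or_ge p i with h' | h'
      · rw [insR_word_right x h', red_map_some]; exact mem_lang hx _ _
      · rw [insR_word_mid x h' h]; exact mem_lang hx _ _

lemma insR_rev (hX : IsSubshift X) (h : insR x p ∈ starShift X) : x ∈ X := by
  apply mem_of_words hX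
  intro n
  set i : ℤ := min p (-(n : ℤ)) with hi
  have h1 : i ≤ p := min_le_left _ _
  have h2 : i ≤ -(n : ℤ) := min_le_right _ _
  set a : ℕ := (p - i).toNat with haa
  set b : ℕ := ((n : ℤ) - i).toNat with hbb
  refine ⟨i, a + b + 1, h2, by omega, ?_⟩
  have := h.2 i (a + b + 2)
  rwa [insR_word_mid x h1 (by omega)] at this

lemma glue_nonneg {l r : ℕ → A} (h : 0 ≤ i) : glue l r i = r i.toNat := if_pos h

lemma glue_neg {l r : ℕ → A} (h : i < 0) : glue l r i = l (-1 - i).toNat := if_neg (by omega)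

lemma glue_someRay (l r : ℕ → A) :
    glue (someRay l) (someRay r) = fun i => some (glue l r i) := by
  funext i
  unfold glue someRay
  split_ifs <;> rfl

lemma noStar_mem (hx : x ∈ X) : (fun i => some (x i)) ∈ starShift X := by
  constructor
  · rintro i ⟨hA, hB⟩; exact Option.some_ne_none _ hA
  · intro i k
    rw [cfgWord_comp, red_map_some]
    exact mem_lang hx _ _

lemma noStar_rev (hX : IsSubshift X) (h : (fun i => some (x i)) ∈ starShift X) : x ∈ X := by
  apply mem_of_words hX
  intro n
  refine ⟨-(n : ℤ), 2 * n + 1, le_refl _, by push_cast; omega, ?_⟩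
  have := h.2 (-(n : ℤ)) (2 * n + 1)
  rwa [cfgWord_comp, red_map_some] at this

lemma foll_some_iff (hX : IsSubshift X) {l r : ℕ → A} :
    someRay r ∈ foll (starShift X) (someRay l) ↔ r ∈ foll X l := by
  show glue (someRay l) (someRay r) ∈ starShift X ↔ glue l r ∈ X
  rw [glue_someRay]
  exact ⟨noStar_rev hX, noStar_mem⟩

lemma glue_ext (l r : ℕ → A) :
    glue (extendRay (someRay l) none) (someRay r) = insR (shiftMap (glue l r)) (-1) := by
  funext i
  rcases lt_trichotomy i (-1) with h | h | h
  · rw [glue_neg (show i < 0 by omega)]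
    have hne : (-1 - i).toNat ≠ 0 := by omega
    show extendRay (someRay l) none _ = _
    unfold extendRay someRay insR shiftMap
    rw [if_neg hne, if_pos h]
    rw [glue_neg (show i + 1 < 0 by omega)]
    exact congrArg some (congrArg l (by omega))
  · subst h
    rw [glue_neg (show (-1 : ℤ) < 0 by omega)]
    show extendRay (someRay l) none _ = _
    unfold extendRay insR
    rw [if_pos (by omega), if_neg (by omega), if_pos rfl]
  · rw [glue_nonneg (show (0 : ℤ) ≤ i by omega)]
    show someRay r _ = _
    unfold someRay insR shiftMap
    rw [if_neg (by omega), if_neg (by omega)]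
    rw [glue_nonneg (show (0 : ℤ) ≤ i - 1 + 1 by omega)]
    exact congrArg some (congrArg r (by omega))

lemma foll_ext_iff (hX : IsSubshift X) {l r : ℕ → A} :
    someRay r ∈ foll (starShift X) (extendRay (someRay l) none) ↔ r ∈ foll X l := by
  show glue (extendRay (someRay l) none) (someRay r) ∈ starShift X ↔ glue l r ∈ X
  rw [glue_ext]
  constructor
  · intro h
    have hy := insR_rev hX h
    have h2 := hX.2.2.1 _ hy
    have he : shiftInvMap (shiftMap (glue l r)) = glue l r := by
      funext i
      exact congrArg (glue l r) (by ring)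
    rwa [he] at h2
  · intro h
    exact insR_mem (hX.2.1 _ h) _

lemma someRay_leftRay (z : ℤ → A) : someRay (leftRay z) = leftRay (fun i => some (z i)) := rfl

end Aux

theorem stmt18 [Finite A] (X : Set (ℤ → A)) (hX : IsSubshift X) :
    (∀ l₁ ∈ LeftRays X, ∀ l₂ ∈ LeftRays X,
      foll (starShift X) (someRay l₁) ≠
        foll (starShift X) (extendRay (someRay l₂) none) ∧
      (foll X l₁ ≠ foll X l₂ →
        foll (starShift X) (someRay l₁) ≠ foll (starShift X) (someRay l₂) ∧
        foll (starShift X) (extendRay (someRay l₁) none) ≠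
          foll (starShift X) (extendRay (someRay l₂) none))) ∧
    (¬ Sofic X → ¬ Sofic (starShift X)) := by
  classical
  have hfoll_eq : ∀ l₁ l₂ : ℕ → A,
      foll (starShift X) (someRay l₁) = foll (starShift X) (someRay l₂) →
      foll X l₁ = foll X l₂ := by
    intro l₁ l₂ heq
    ext r
    rw [← foll_some_iff hX, ← foll_some_iff hX, heq]
  constructor
  · rintro l₁ ⟨z₁, hz₁, rfl⟩ l₂ hl₂
    constructor
    · -- part (a)
      intro heq
      set r₀ : ℕ → Option A := fun n => if n = 0 then none else some (z₁ ((n : ℤ) - 1))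
        with hr₀
      have hr0 : r₀ 0 = none := rfl
      have hrpos : ∀ n : ℕ, n ≠ 0 → r₀ n = some (z₁ ((n : ℤ) - 1)) := by
        intro n hn
        rw [hr₀]
        simp [hn]
      have h1 : r₀ ∈ foll (starShift X) (someRay (leftRay z₁)) := by
        show glue (someRay (leftRay z₁)) r₀ ∈ starShift X
        have hg : glue (someRay (leftRay z₁)) r₀ = insR z₁ 0 := by
          funext i
          rcases lt_trichotomy i 0 with h | h | h
          · rw [glue_neg h]
            show someRay (leftRay z₁) _ = _
            unfold someRay leftRay insR
            rw [if_pos h]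
            exact congrArg some (congrArg z₁ (by omega))
          · subst h
            rw [glue_nonneg le_rfl]
            have : ((0 : ℤ)).toNat = 0 := rfl
            rw [this, hr0]
            unfold insR
            rw [if_neg (by omega), if_pos rfl]
          · rw [glue_nonneg (by omega), hrpos i.toNat (by omega)]
            unfold insR
            rw [if_neg (by omega), if_neg (by omega)]
            exact congrArg some (congrArg z₁ (by omega))
        rw [hg]
        exact insR_mem hz₁ 0
      rw [heq] at h1
      have hva : glue (extendRay (someRay l₂) none) r₀ (-1) = none := by
        rw [glue_neg (by omega)]
        show extendRay (someRay l₂) none (-1 - (-1 : ℤ)).toNat = none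
        norm_num
        rfl
      have hvb : glue (extendRay (someRay l₂) none) r₀ 0 = none := by
        rw [glue_nonneg le_rfl]
        rfl
      exact h1.1 (-1) ⟨hva, by rw [show (-1 : ℤ) + 1 = 0 by ring]; exact hvb⟩
    · intro hfoll
      constructor
      · intro heq
        exact hfoll (hfoll_eq _ _ heq)
      · intro heq
        apply hfoll
        ext r
        rw [← foll_ext_iff hX, ← foll_ext_iff hX, heq]
  · intro hns hsof
    apply hns
    set f : Set (ℕ → A) → Set (ℕ → Option A) := fun v =>
      if h : KVertex X v then foll (starShift X) (someRay h.choose) else ∅ with hf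
    apply Set.Finite.of_finite_image (f := f)
    · apply hsof.subset
      rintro _ ⟨v, hv, rfl⟩
      have hv' : KVertex X v := hv
      rw [hf]
      simp only [dif_pos hv']
      obtain ⟨hl, hvv⟩ := hv'.choose_spec
      obtain ⟨z, hz, hlz⟩ := hl
      refine ⟨someRay hv'.choose, ⟨fun i => some (z i), noStar_mem hz, ?_⟩, rfl⟩
      rw [← someRay_leftRay, hlz]
    · intro v₁ h₁ v₂ h₂ hfe
      have h₁' : KVertex X v₁ := h₁
      have h₂' : KVertex X v₂ := h₂
      rw [hf] at hfe
      simp only [dif_pos h₁', dif_pos h₂'] at hfe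
      rw [h₁'.choose_spec.2, h₂'.choose_spec.2]
      exact hfoll_eq _ _ hfe

end Paper
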